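/- Suppose V, S : [t₀, ∞) → ℝ are continuous, with V(t) ≤ S(t) for all t, and on each interval [tᵢ^off, tᵢ₊₁^on) the specification satisfies S' = -λ·S with λ > 0 and S(tᵢ^off) = (V(tᵢ^on) + V(tᵢ^off))/2, while on [tᵢ^on, tᵢ^off) V is nonincreasing with V(tᵢ^off) ≤ V(tᵢ^on). If V ≥ 0, the interval lengths tᵢ^off − tᵢ^off are uniformly bounded below by τ > 0, and S is continuous and nonincreasing across switching times, then S(t) → 0 and hence V(t) → 0 as t → ∞. -/

import Mathlib

/-- Concrete performance specification after Corollary 1: `S` decays exponentially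
(`S' = -λ S`) on the off-intervals `[tᵢ^off, tᵢ₊₁^on)`, is reset to
`(V(tᵢ^on) + V(tᵢ^off))/2` at each `tᵢ^off`, `V` is nonincreasing on the on-intervals,
`0 ≤ V ≤ S`, the off-interval lengths are uniformly bounded below by `τ > 0`, and `S` is
continuous and nonincreasing across switching times.  Then `S → 0` and hence `V → 0`. -/
theorem stmt_15 (V S : ℝ → ℝ) (ton toff : ℕ → ℝ) (lam τ : ℝ)
    (hlam : 0 < lam) (hτ : 0 < τ)
    (horder : ∀ i, ton i < toff i ∧ toff i < ton (i + 1))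
    (hVcont : ContinuousOn V (Set.Ici (ton 0)))
    (hScont : ContinuousOn S (Set.Ici (ton 0)))
    (hVS : ∀ t, ton 0 ≤ t → V t ≤ S t)
    (hVpos : ∀ t, 0 ≤ V t)
    (hSdecay : ∀ i, ∀ t ∈ Set.Ico (toff i) (ton (i + 1)), HasDerivAt S (-lam * S t) t)
    (hSreset : ∀ i, S (toff i) = (V (ton i) + V (toff i)) / 2)
    (hVmono : ∀ i, AntitoneOn V (Set.Icc (ton i) (toff i)))
    (hVdec : ∀ i, V (toff i) ≤ V (ton i))
    (hdwell : ∀ i, τ ≤ ton (i + 1) - toff i)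
    (hSmono : AntitoneOn S (Set.Ici (ton 0))) :
    Filter.Tendsto S Filter.atTop (nhds 0) ∧
      Filter.Tendsto V Filter.atTop (nhds 0) := by
  -- basic ordering facts
  have hmono : Monotone ton := monotone_nat_of_le_succ fun n =>
    le_of_lt ((horder n).1.trans (horder n).2)
  have hton0 : ∀ n, ton 0 ≤ ton n := fun n => hmono (Nat.zero_le n)
  have htoffIci : ∀ n, toff n ∈ Set.Ici (ton 0) := fun n =>
    le_of_lt (lt_of_le_of_lt (hton0 n) (horder n).1)
  have htonIci : ∀ n, ton n ∈ Set.Ici (ton 0) := fun n => hton0 n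
  have hSnonneg : ∀ t, ton 0 ≤ t → 0 ≤ S t := fun t ht =>
    le_trans (hVpos t) (hVS t ht)
  -- exponential decay over each off interval
  have hstep : ∀ n, S (ton (n + 1)) =
      S (toff n) * Real.exp (-lam * (ton (n + 1) - toff n)) := by
    intro n
    set a := toff n with ha
    set b := ton (n + 1) with hb
    have hab : a < b := (horder n).2
    set g : ℝ → ℝ := fun t => S t * Real.exp (lam * t) with hg
    have hgderiv : ∀ t ∈ Set.Ico a b, HasDerivAt g 0 t := by
      intro t ht
      have h1 : HasDerivAt S (-lam * S t) t := hSdecay n t ht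
      have h2 : HasDerivAt (fun t => Real.exp (lam * t)) (lam * Real.exp (lam * t)) t := by
        have := (Real.hasDerivAt_exp (lam * t)).comp t ((hasDerivAt_id t).const_mul lam)
        simpa [mul_comm, Function.comp_def] using this
      have := h1.mul h2
      have heq : (-lam * S t) * Real.exp (lam * t) + S t * (lam * Real.exp (lam * t)) = 0 := by
        ring
      rw [heq] at this
      exact this
    have hconv : Convex ℝ (Set.Icc a b) := convex_Icc a b
    have hIccIci : Set.Icc a b ⊆ Set.Ici (ton 0) := fun x hx =>
      le_trans (htoffIci n) hx.1
    have hgcont : ContinuousOn g (Set.Icc a b) := by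
      exact ((hScont.mono hIccIci).mul
        ((Real.continuous_exp.comp (continuous_const.mul continuous_id)).continuousOn))
    have hint : interior (Set.Icc a b) = Set.Ioo a b := interior_Icc
    have hdiff : DifferentiableOn ℝ g (interior (Set.Icc a b)) := by
      rw [hint]
      intro x hx
      exact (hgderiv x ⟨le_of_lt hx.1, hx.2⟩).differentiableAt.differentiableWithinAt
    have hderiv0 : ∀ x ∈ interior (Set.Icc a b), deriv g x = 0 := by
      rw [hint]
      intro x hx
      exact (hgderiv x ⟨le_of_lt hx.1, hx.2⟩).deriv
    have hmonog : MonotoneOn g (Set.Icc a b) :=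
      monotoneOn_of_deriv_nonneg hconv hgcont hdiff (fun x hx => (hderiv0 x hx).ge)
    have hantig : AntitoneOn g (Set.Icc a b) :=
      antitoneOn_of_deriv_nonpos hconv hgcont hdiff (fun x hx => (hderiv0 x hx).le)
    have haI : a ∈ Set.Icc a b := ⟨le_refl a, le_of_lt hab⟩
    have hbI : b ∈ Set.Icc a b := ⟨le_of_lt hab, le_refl b⟩
    have hgeq : g b = g a :=
      le_antisymm (hantig haI hbI (le_of_lt hab)) (hmonog haI hbI (le_of_lt hab))
    have : S b * Real.exp (lam * b) = S a * Real.exp (lam * a) := hgeq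
    have hexp : Real.exp (-lam * (b - a)) = Real.exp (lam * a) / Real.exp (lam * b) := by
      rw [← Real.exp_sub]; ring_nf
    rw [hexp]
    field_simp
    linarith [this]
  -- geometric decay of S (toff n)
  set q : ℝ := Real.exp (-lam * τ) with hq
  have hq0 : 0 < q := Real.exp_pos _
  have hq1 : q < 1 := by
    rw [hq, Real.exp_lt_one_iff]
    nlinarith
  have hgeo : ∀ n, S (toff n) ≤ q ^ n * S (toff 0) := by
    intro n
    induction n with
    | zero => simp
    | succ n ih =>
      have h1 : S (toff (n + 1)) ≤ S (ton (n + 1)) :=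
        hSmono (htonIci (n + 1)) (htoffIci (n + 1)) (le_of_lt (horder (n + 1)).1)
      have h2 : S (ton (n + 1)) ≤ S (toff n) * q := by
        rw [hstep n]
        have hSa : 0 ≤ S (toff n) := hSnonneg _ (htoffIci n)
        have : Real.exp (-lam * (ton (n + 1) - toff n)) ≤ q := by
          rw [hq, Real.exp_le_exp]
          nlinarith [hdwell n]
        nlinarith
      have hqn : (0:ℝ) ≤ q ^ n := le_of_lt (pow_pos hq0 n)
      calc S (toff (n + 1)) ≤ S (toff n) * q := h1.trans h2
        _ ≤ (q ^ n * S (toff 0)) * q := by nlinarith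
        _ = q ^ (n + 1) * S (toff 0) := by ring
  -- S tends to 0
  have hSlim : Filter.Tendsto S Filter.atTop (nhds 0) := by
    rw [Metric.tendsto_atTop]
    intro ε hε
    have hlim : Filter.Tendsto (fun n => q ^ n * S (toff 0)) Filter.atTop (nhds 0) := by
      have := tendsto_pow_atTop_nhds_zero_of_lt_one (le_of_lt hq0) hq1
      simpa using this.mul_const (S (toff 0))
    obtain ⟨N, hN⟩ := (Metric.tendsto_atTop.1 hlim) ε hε
    refine ⟨toff N, fun t ht => ?_⟩
    have htIci : t ∈ Set.Ici (ton 0) := le_trans (htoffIci N) ht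
    have h1 : S t ≤ S (toff N) := hSmono (htoffIci N) htIci ht
    have h2 : S (toff N) ≤ q ^ N * S (toff 0) := hgeo N
    have h3 : 0 ≤ S t := hSnonneg t htIci
    have h4 := hN N (le_refl N)
    rw [Real.dist_eq, sub_zero] at h4 ⊢
    have hqN : 0 ≤ q ^ N * S (toff 0) := le_trans h3 (h1.trans h2)
    rw [abs_of_nonneg hqN] at h4
    rw [abs_of_nonneg h3]
    linarith
  refine ⟨hSlim, ?_⟩
  -- V squeezed between 0 and S
  have h0 : Filter.Tendsto (fun _ : ℝ => (0:ℝ)) Filter.atTop (nhds 0) := tendsto_const_nhds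
  refine tendsto_of_tendsto_of_tendsto_of_le_of_le' h0 hSlim ?_ ?_
  · exact Filter.Eventually.of_forall (fun t => hVpos t)
  · filter_upwards [Filter.eventually_ge_atTop (ton 0)] with t ht
    exact hVS t ht
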